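/- Let u ∈ ℝ⁶ with ρ ≠ 0 and let α ∈ ℝ, α ≠ 0. Set V = u + f(u)/α with components (V₁, …, V₆). Then (2V₁V₄ − V₂²)(2V₁V₆ − V₃²) − (2V₁V₅ − V₂V₃)² = (p₁₁p₂₂ − p₁₂²)·ρ(v₁ + α)²·(ρ(v₁ + α)² − p₁₁)/α⁴, where ρ, v₁, p₁₁, p₁₂, p₂₂ refer to the primitive variables of u. -/
import Mathlib


noncomputable section

/-- Density of a Ten-Moment state. -/
def rho (u : Fin 6 → ℝ) : ℝ := u 0

/-- First velocity component. -/
def v1 (u : Fin 6 → ℝ) : ℝ := u 1 / u 0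

/-- Second velocity component. -/
def v2 (u : Fin 6 → ℝ) : ℝ := u 2 / u 0

/-- Pressure component `p₁₁`. -/
def p11 (u : Fin 6 → ℝ) : ℝ := 2 * u 3 - (u 1) ^ 2 / u 0

/-- Pressure component `p₁₂`. -/
def p12 (u : Fin 6 → ℝ) : ℝ := 2 * u 4 - u 1 * u 2 / u 0

/-- Pressure component `p₂₂`. -/
def p22 (u : Fin 6 → ℝ) : ℝ := 2 * u 5 - (u 2) ^ 2 / u 0

/-- The admissible set: positive density and positive definite pressure tensor. -/
def Uad : Set (Fin 6 → ℝ) :=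
  {u | 0 < rho u ∧ 0 < p11 u ∧ 0 < p11 u * p22 u - (p12 u) ^ 2}

/-- The x-direction flux of the Ten-Moment system. -/
def fluxX (u : Fin 6 → ℝ) : Fin 6 → ℝ :=
  ![rho u * v1 u,
    rho u * (v1 u) ^ 2 + p11 u,
    rho u * v1 u * v2 u + p12 u,
    (u 3 + p11 u) * v1 u,
    u 4 * v1 u + (p11 u * v2 u + p12 u * v1 u) / 2,
    u 5 * v1 u + p12 u * v2 u]

/-- The maximal wave speed in the x-direction. -/
def alphaX (u : Fin 6 → ℝ) : ℝ := |v1 u| + Real.sqrt (3 * p11 u / rho u)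

set_option maxHeartbeats 2000000 in
/-- Algebraic identity for the pressure determinant of the split state `V = u + f(u)/α`. -/
theorem split_det_identity (u : Fin 6 → ℝ) (hρ : rho u ≠ 0) (α : ℝ) (hα : α ≠ 0) :
    (2 * (u 0 + fluxX u 0 / α) * (u 3 + fluxX u 3 / α) - (u 1 + fluxX u 1 / α) ^ 2) *
        (2 * (u 0 + fluxX u 0 / α) * (u 5 + fluxX u 5 / α) - (u 2 + fluxX u 2 / α) ^ 2) -
      (2 * (u 0 + fluxX u 0 / α) * (u 4 + fluxX u 4 / α) -
        (u 1 + fluxX u 1 / α) * (u 2 + fluxX u 2 / α)) ^ 2 =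
    (p11 u * p22 u - (p12 u) ^ 2) * rho u * (v1 u + α) ^ 2 *
      (rho u * (v1 u + α) ^ 2 - p11 u) / α ^ 4 := by
  have h0 : u 0 ≠ 0 := hρ
  have e0 : fluxX u 0 = u 0 * (u 1 / u 0) := rfl
  have e1 : fluxX u 1 = u 0 * (u 1 / u 0) ^ 2 + (2 * u 3 - (u 1) ^ 2 / u 0) := rfl
  have e2 : fluxX u 2 = u 0 * (u 1 / u 0) * (u 2 / u 0) + (2 * u 4 - u 1 * u 2 / u 0) := rfl
  have e3 : fluxX u 3 = (u 3 + (2 * u 3 - (u 1) ^ 2 / u 0)) * (u 1 / u 0) := rfl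
  have e4 : fluxX u 4 = u 4 * (u 1 / u 0) + ((2 * u 3 - (u 1) ^ 2 / u 0) * (u 2 / u 0) + (2 * u 4 - u 1 * u 2 / u 0) * (u 1 / u 0)) / 2 := rfl
  have e5 : fluxX u 5 = u 5 * (u 1 / u 0) + (2 * u 4 - u 1 * u 2 / u 0) * (u 2 / u 0) := rfl
  rw [e0, e1, e2, e3, e4, e5]
  unfold rho v1 p11 p12 p22
  field_simp
  ring
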